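/- Let T be a normal subgroup of a finite group G such that T' = T ∩ G'. Then T' is directly decomposable in G, i.e., for every internal direct product decomposition G = L·M one has T' = (T' ∩ L)·(T' ∩ M). -/

import Mathlib

open scoped Pointwise
open scoped commutatorElement

theorem commutator_mul_mul_aux {G : Type*} [Group G] {a b c d : G}
    (hab : Commute a b) (had : Commute a d) (hcb : Commute c b) (hcd : Commute c d) :
    ⁅a * b, c * d⁆ = ⁅a, c⁆ * ⁅b, d⁆ := by
  have h1 : Commute a (b * d * b⁻¹) := (hab.mul_right had).mul_right hab.inv_right
  have h2 : Commute c (b * d * b⁻¹ * d⁻¹) :=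
    ((hcb.mul_right hcd).mul_right hcb.inv_right).mul_right hcd.inv_right
  have e1 : b * c = c * b := hcb.symm.eq
  calc ⁅a * b, c * d⁆ = a * (b * c) * d * b⁻¹ * a⁻¹ * d⁻¹ * c⁻¹ := by group
    _ = a * (c * b) * d * b⁻¹ * a⁻¹ * d⁻¹ * c⁻¹ := by rw [e1]
    _ = a * c * ((b * d * b⁻¹) * a⁻¹) * (d⁻¹ * c⁻¹) := by group
    _ = a * c * (a⁻¹ * (b * d * b⁻¹)) * (d⁻¹ * c⁻¹) := by rw [← h1.inv_left.eq]
    _ = a * c * a⁻¹ * ((b * d * b⁻¹ * d⁻¹) * c⁻¹) := by group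
    _ = a * c * a⁻¹ * (c⁻¹ * (b * d * b⁻¹ * d⁻¹)) := by rw [← h2.inv_left.eq]
    _ = ⁅a, c⁆ * ⁅b, d⁆ := by group

theorem derived_of_normal_directlyDecomposable
    {G : Type*} [Group G] [Finite G] (T : Subgroup G) (hT : T.Normal)
    (hT' : ⁅T, T⁆ = T ⊓ commutator G) :
    ∀ L M : Subgroup G, L.Normal → M.Normal → L ⊓ M = ⊥ → L ⊔ M = ⊤ →
      (((⁅T, T⁆ : Subgroup G) ⊓ L : Subgroup G) : Set G) *
        (((⁅T, T⁆ : Subgroup G) ⊓ M : Subgroup G) : Set G)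
        = ((⁅T, T⁆ : Subgroup G) : Set G) := by
  intro L M hL hM hbot hsup
  haveI : M.Normal := hM
  haveI : L.Normal := hL
  haveI hTTn : (⁅T, T⁆ : Subgroup G).Normal := Subgroup.commutator_normal T T
  haveI : ((⁅T, T⁆ : Subgroup G) ⊓ M).Normal := Subgroup.normal_inf_normal _ _
  -- elements of L and M commute
  have hcomm : ∀ x y : G, x ∈ L → y ∈ M → Commute x y := fun x y hx hy =>
    Subgroup.commute_of_normal_of_disjoint L M hL hM (disjoint_iff.mpr hbot) x y hx hy
  -- every element of G decomposes
  have hdecomp : ∀ g : G, ∃ a ∈ L, ∃ b ∈ M, g = a * b := by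
    intro g
    have hg : g ∈ L ⊔ M := hsup ▸ Subgroup.mem_top g
    rw [SetLike.mem_coe.symm, Subgroup.mul_normal L M] at hg
    obtain ⟨a, ha, b, hb, hab⟩ := hg
    exact ⟨a, ha, b, hb, hab.symm⟩
  -- commutators of elements of G with elements of T lie in ⁅T, T⁆
  have hmemTT : ∀ g : G, ∀ s ∈ T, ⁅g, s⁆ ∈ (⁅T, T⁆ : Subgroup G) := by
    intro g s hs
    rw [hT', Subgroup.mem_inf]
    constructor
    · have h : ⁅g, s⁆ = (g * s * g⁻¹) * s⁻¹ := by group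
      rw [h]
      exact T.mul_mem (hT.conj_mem s hs g) (T.inv_mem hs)
    · exact Subgroup.commutator_mem_commutator (Subgroup.mem_top g) (Subgroup.mem_top s)
  have hle : (⁅T, T⁆ : Subgroup G) ≤
      ((⁅T, T⁆ : Subgroup G) ⊓ L) ⊔ ((⁅T, T⁆ : Subgroup G) ⊓ M) := by
    rw [Subgroup.commutator_le]
    intro t ht s hs
    obtain ⟨a, ha, b, hb, htab⟩ := hdecomp t
    obtain ⟨c, hc, d, hd, hscd⟩ := hdecomp s
    have hsplit : ⁅t, s⁆ = ⁅a, c⁆ * ⁅b, d⁆ := by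
      rw [htab, hscd]
      exact commutator_mul_mul_aux (hcomm a b ha hb) (hcomm a d ha hd)
        (hcomm c b hc hb) (hcomm c d hc hd)
    -- ⁅a, c⁆ = ⁅a, s⁆
    have hac : ⁅a, c⁆ = ⁅a, s⁆ := by
      rw [hscd]
      have := commutator_mul_mul_aux (Commute.one_right a) (hcomm a d ha hd)
        (Commute.one_right c) (hcomm c d hc hd)
      simpa using this.symm
    have hbd : ⁅b, d⁆ = ⁅b, s⁆ := by
      rw [hscd]
      have := commutator_mul_mul_aux (Commute.one_left b) (Commute.one_left d)
        (hcomm c b hc hb) (hcomm c d hc hd)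
      simpa using this.symm
    have h1 : ⁅a, c⁆ ∈ (⁅T, T⁆ : Subgroup G) ⊓ L := by
      rw [Subgroup.mem_inf]
      constructor
      · rw [hac]; exact hmemTT a s hs
      · show a * c * a⁻¹ * c⁻¹ ∈ L
        exact L.mul_mem (L.mul_mem (L.mul_mem ha hc) (L.inv_mem ha)) (L.inv_mem hc)
    have h2 : ⁅b, d⁆ ∈ (⁅T, T⁆ : Subgroup G) ⊓ M := by
      rw [Subgroup.mem_inf]
      constructor
      · rw [hbd]; exact hmemTT b s hs
      · show b * d * b⁻¹ * d⁻¹ ∈ M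
        exact M.mul_mem (M.mul_mem (M.mul_mem hb hd) (M.inv_mem hb)) (M.inv_mem hd)
    rw [hsplit]
    exact mul_mem (Subgroup.mem_sup_left h1) (Subgroup.mem_sup_right h2)
  have heq : ((⁅T, T⁆ : Subgroup G) ⊓ L) ⊔ ((⁅T, T⁆ : Subgroup G) ⊓ M)
      = (⁅T, T⁆ : Subgroup G) := le_antisymm (sup_le inf_le_left inf_le_left) hle
  rw [← Subgroup.mul_normal, heq]
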